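/- In the quotient ring A = R[η]/(η^k + s_1 η^{k-1} + ... + s_k), where s_i are the elementary symmetric polynomials in x_1,...,x_k, the coefficient of η^{k-1} when η^{d+k-1} is expanded in the basis 1, η, ..., η^{k-1} equals (-1)^d · p_d(x_1,...,x_k), where p_d is the complete homogeneous symmetric polynomial of degree d. -/

import Mathlib

open Finset Polynomial MvPolynomial

/-- The complete homogeneous symmetric polynomial of degree `d` in `k` variables. -/
noncomputable def hsymm (k d : ℕ) : MvPolynomial (Fin k) ℤ :=
  ∑ f ∈ Finset.Nat.antidiagonalTuple k d, ∏ i, MvPolynomial.X i ^ f i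

lemma coeff_H (k d : ℕ) :
    PowerSeries.coeff d (∏ i : Fin k, PowerSeries.mk fun m => (MvPolynomial.X i : MvPolynomial (Fin k) ℤ) ^ m)
      = hsymm k d := by
  rw [PowerSeries.coeff_prod]
  unfold _root_.hsymm
  refine Finset.sum_nbij' (fun l => (l : Fin k → ℕ)) (fun f => Finsupp.equivFunOnFinite.symm f) ?_ ?_ ?_ ?_ ?_
  · intro l hl
    rw [Finset.mem_finsuppAntidiag] at hl
    rw [Finset.Nat.mem_antidiagonalTuple]
    exact hl.1
  · intro f hf
    rw [Finset.Nat.mem_antidiagonalTuple] at hf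
    rw [Finset.mem_finsuppAntidiag]
    constructor
    · simpa using hf
    · exact Finset.subset_univ _
  · intro l _; exact Finsupp.equivFunOnFinite.symm_apply_apply l
  · intro f _; rfl
  · intro l _
    simp [PowerSeries.coeff_mk]

lemma one_sub_mul_mk {A : Type*} [CommRing A] (a : A) :
    (1 - PowerSeries.C a * PowerSeries.X) * PowerSeries.mk (fun m => a ^ m) = 1 := by
  ext n
  rw [sub_mul, one_mul, mul_assoc]
  cases n with
  | zero => simp
  | succ n =>
    simp [PowerSeries.coeff_succ_X_mul, PowerSeries.coeff_mk, pow_succ, mul_comm]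

lemma natDeg_one_add_CX {A : Type*} [CommRing A] (a : A) :
    (1 + Polynomial.C a * Polynomial.X : Polynomial A).natDegree ≤ 1 := by
  apply (Polynomial.natDegree_add_le _ _).trans
  simp [Polynomial.natDegree_C_mul_le _ _ |>.trans Polynomial.natDegree_X_le]

lemma natDeg_X_add_C' {A : Type*} [CommRing A] (a : A) :
    (Polynomial.X + Polynomial.C a : Polynomial A).natDegree ≤ 1 := by
  apply (Polynomial.natDegree_add_le _ _).trans
  simp [Polynomial.natDegree_X_le]

lemma reflect_prod_aux {A : Type*} [CommRing A] (s : Finset ℕ) (r : ℕ → A) :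
    Polynomial.reflect s.card (∏ i ∈ s, (Polynomial.X + Polynomial.C (r i)))
      = ∏ i ∈ s, (1 + Polynomial.C (r i) * Polynomial.X) := by
  induction s using Finset.induction with
  | empty => simp
  | @insert a s' ha ih =>
    rw [Finset.prod_insert ha, Finset.prod_insert ha, Finset.card_insert_of_notMem ha,
      add_comm s'.card 1,
      Polynomial.reflect_mul _ _ (natDeg_X_add_C' _)
        ((Polynomial.natDegree_prod_le _ _).trans
          ((Finset.sum_le_card_nsmul _ _ 1 (fun i _ => natDeg_X_add_C' _)).trans (by simp))),
      ih]
    congr 1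
    rw [Polynomial.reflect_add]
    simp [add_comm]

lemma reflect_prod_aux' {ι A : Type*} [CommRing A] (s : Finset ι) (r : ι → A) :
    Polynomial.reflect s.card (∏ i ∈ s, (Polynomial.X + Polynomial.C (r i)))
      = ∏ i ∈ s, (1 + Polynomial.C (r i) * Polynomial.X) := by
  classical
  induction s using Finset.induction with
  | empty => simp
  | @insert a s' ha ih =>
    rw [Finset.prod_insert ha, Finset.prod_insert ha, Finset.card_insert_of_notMem ha,
      add_comm s'.card 1,
      Polynomial.reflect_mul _ _ (natDeg_X_add_C' _)
        ((Polynomial.natDegree_prod_le _ _).trans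
          ((Finset.sum_le_card_nsmul _ _ 1 (fun i _ => natDeg_X_add_C' _)).trans (by simp))),
      ih]
    congr 1
    rw [Polynomial.reflect_add]
    simp [add_comm]

lemma coeff_E (k d : ℕ) :
    PowerSeries.coeff d (∏ i : Fin k,
        (1 - PowerSeries.C (MvPolynomial.X i : MvPolynomial (Fin k) ℤ) * PowerSeries.X))
      = (-1 : MvPolynomial (Fin k) ℤ) ^ d * esymm (Fin k) ℤ d := by
  have hco : (∏ i : Fin k,
      (1 - PowerSeries.C (MvPolynomial.X i : MvPolynomial (Fin k) ℤ) * PowerSeries.X))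
      = ((∏ i : Fin k, (1 - Polynomial.C (MvPolynomial.X i) * Polynomial.X) :
          Polynomial (MvPolynomial (Fin k) ℤ)) : PowerSeries (MvPolynomial (Fin k) ℤ)) := by
    rw [← Polynomial.coeToPowerSeries.ringHom_apply, map_prod]
    simp
  rw [hco, Polynomial.coeff_coe]
  have hrefl := reflect_prod_aux' (Finset.univ : Finset (Fin k))
    (fun i => -(MvPolynomial.X i : MvPolynomial (Fin k) ℤ))
  rw [Finset.card_univ, Fintype.card_fin] at hrefl
  have hprod : (∏ i : Fin k, (1 - Polynomial.C (MvPolynomial.X i) * Polynomial.X) :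
      Polynomial (MvPolynomial (Fin k) ℤ))
      = Polynomial.reflect k (∏ i : Fin k, (Polynomial.X + Polynomial.C (-MvPolynomial.X i))) := by
    rw [hrefl]
    simp [sub_eq_add_neg]
  rw [hprod, Polynomial.coeff_reflect]
  by_cases hd : d ≤ k
  · rw [Polynomial.revAt_le (by simpa using hd), Finset.prod_X_add_C_coeff _ _ (by simp)]
    rw [show (Finset.univ : Finset (Fin k)).card - (k - d) = d by simp [Nat.sub_sub_self hd]]
    rw [MvPolynomial.esymm, Finset.mul_sum, ← Finset.sum_congr rfl]
    intro t ht
    rw [Finset.mem_powersetCard] at ht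
    have : ∏ i ∈ t, -(MvPolynomial.X i : MvPolynomial (Fin k) ℤ)
        = ∏ i ∈ t, (-1) * MvPolynomial.X i :=
      Finset.prod_congr rfl (fun i _ => (neg_one_mul _).symm)
    rw [this, Finset.prod_mul_distrib, Finset.prod_const, ht.2]
  · push_neg at hd
    rw [Polynomial.coeff_eq_zero_of_natDegree_lt, MvPolynomial.esymm,
      Finset.powersetCard_eq_empty.mpr (by simpa using hd), Finset.sum_empty, mul_zero]
    have h1 : (∏ i : Fin k, (Polynomial.X + Polynomial.C (-MvPolynomial.X i)) :
        Polynomial (MvPolynomial (Fin k) ℤ)).natDegree ≤ k :=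
      (Polynomial.natDegree_prod_le _ _).trans
        ((Finset.sum_le_card_nsmul _ _ 1 (fun i _ => natDeg_X_add_C' _)).trans (by simp))
    exact h1.trans_lt (by
      rw [Polynomial.revAt_eq_self_of_lt (by omega)]
      exact hd)

lemma conv' (k t : ℕ) (ht : 1 ≤ t) :
    ∑ m ∈ range (t + 1),
      ((-1 : MvPolynomial (Fin k) ℤ) ^ m * hsymm k m) * esymm (Fin k) ℤ (t - m) = 0 := by
  have h1 : (∏ i : Fin k, PowerSeries.mk fun m => (MvPolynomial.X i : MvPolynomial (Fin k) ℤ) ^ m)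
      * (∏ i : Fin k, (1 - PowerSeries.C (MvPolynomial.X i : MvPolynomial (Fin k) ℤ)
          * PowerSeries.X)) = 1 := by
    rw [← Finset.prod_mul_distrib]
    apply Finset.prod_eq_one
    intro i _
    rw [mul_comm]
    exact one_sub_mul_mk _
  have h2 := congrArg (PowerSeries.coeff (R := MvPolynomial (Fin k) ℤ) t) h1
  rw [PowerSeries.coeff_mul, PowerSeries.coeff_one, if_neg (by omega),
    Finset.Nat.sum_antidiagonal_eq_sum_range_succ_mk] at h2
  simp only [coeff_H, coeff_E] at h2
  have h3 : ∀ m ∈ range (t + 1),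
      ((-1 : MvPolynomial (Fin k) ℤ) ^ m * hsymm k m) * esymm (Fin k) ℤ (t - m)
        = (-1) ^ t * (hsymm k m * ((-1) ^ (t - m) * esymm (Fin k) ℤ (t - m))) := by
    intro m hm
    rw [Finset.mem_range] at hm
    have hp : (-1 : MvPolynomial (Fin k) ℤ) ^ t * (-1) ^ (t - m) = (-1) ^ m := by
      rw [← pow_add, show t + (t - m) = m + 2 * (t - m) by omega, pow_add, pow_mul,
        neg_one_sq, one_pow, mul_one]
    calc ((-1 : MvPolynomial (Fin k) ℤ) ^ m * hsymm k m) * esymm (Fin k) ℤ (t - m)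
        = ((-1) ^ t * (-1) ^ (t - m)) * hsymm k m * esymm (Fin k) ℤ (t - m) := by rw [hp]
      _ = (-1) ^ t * (hsymm k m * ((-1) ^ (t - m) * esymm (Fin k) ℤ (t - m))) := by ring
  rw [Finset.sum_congr rfl h3, ← Finset.mul_sum, h2, mul_zero]

lemma hsymm_zero' (k : ℕ) : hsymm k 0 = 1 := by
  unfold _root_.hsymm
  rw [Finset.Nat.antidiagonalTuple_zero_right]
  simp

lemma esymm_gt (k j : ℕ) (h : k < j) : esymm (Fin k) ℤ j = 0 := by
  rw [MvPolynomial.esymm, Finset.powersetCard_eq_empty.mpr (by simpa using h), Finset.sum_empty]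

/-- Lemma 3.2: in `A = R[η]/(η^k + s_1 η^{k-1} + ⋯ + s_k)` with `R = ℤ[x_1,…,x_k]` and
`s_i` the elementary symmetric polynomials, the coefficient of `η^{k-1}` in the expansion of
`η^{d+k-1}` in the basis `1, η, …, η^{k-1}` equals `(-1)^d p_d`, the complete homogeneous
symmetric polynomial of degree `d` (up to sign). -/
theorem stmt_7 (k : ℕ) (hk : 1 ≤ k) (d : ℕ) :
    let s : ℕ → MvPolynomial (Fin k) ℤ := fun i => esymm (Fin k) ℤ i
    let f : Polynomial (MvPolynomial (Fin k) ℤ) :=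
      Polynomial.X ^ k + ∑ i ∈ range k, Polynomial.C (s (i + 1)) * Polynomial.X ^ (k - 1 - i)
    ((Polynomial.X ^ (d + k - 1)) %ₘ f).coeff (k - 1)
      = (-1 : MvPolynomial (Fin k) ℤ) ^ d * hsymm k d := by
  intro s f
  -- `f` as a product of linear factors
  have hfprod : f = ∏ i : Fin k, (Polynomial.X + Polynomial.C (MvPolynomial.X i)) := by
    rw [MvPolynomial.prod_C_add_X_eq_sum_esymm, Fintype.card_fin, Finset.sum_range_succ']
    show f = _
    unfold f
    rw [add_comm]
    congr 1
    · apply Finset.sum_congr rfl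
      intro i _
      unfold s
      congr 2
      omega
    · simp [MvPolynomial.esymm_zero]
  have hmonic : f.Monic := by
    rw [hfprod]
    exact Polynomial.monic_prod_of_monic _ _ (fun i _ => Polynomial.monic_X_add_C _)
  have hdegf : f.natDegree = k := by
    rw [hfprod, Polynomial.natDegree_prod _ _ (fun i _ => (Polynomial.monic_X_add_C _).ne_zero)]
    simp [Polynomial.natDegree_X_add_C]
  have hdegfd : f.degree = (k : WithBot ℕ) := by
    rw [Polynomial.degree_eq_natDegree hmonic.ne_zero, hdegf]
  -- coefficients of f
  have fc : ∀ i : ℕ, f.coeff i = if i ≤ k then esymm (Fin k) ℤ (k - i) else 0 := by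
    intro i
    by_cases hi : i ≤ k
    · have h := MvPolynomial.prod_X_add_C_coeff ℤ (Fin k) i (by simpa using hi)
      rw [Fintype.card_fin] at h
      rw [if_pos hi, hfprod, h]
    · rw [if_neg hi]
      apply Polynomial.coeff_eq_zero_of_natDegree_lt
      rw [hdegf]; omega
  -- the quotient polynomial
  set Q : Polynomial (MvPolynomial (Fin k) ℤ) :=
    ∑ m ∈ range d, Polynomial.C ((-1 : MvPolynomial (Fin k) ℤ) ^ m * hsymm k m)
      * Polynomial.X ^ (d - 1 - m) with hQ
  -- coefficients of `f * Q`
  have key : ∀ n : ℕ, k - 1 ≤ n → n ≤ d + k - 1 → (f * Q).coeff n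
      = ∑ m ∈ range d, (if m ≤ d + k - 1 - n then
          ((-1 : MvPolynomial (Fin k) ℤ) ^ m * hsymm k m) * esymm (Fin k) ℤ (d + k - 1 - n - m)
        else 0) := by
    intro n h1 h2
    rw [hQ, Finset.mul_sum, Polynomial.finset_sum_coeff]
    apply Finset.sum_congr rfl
    intro m hm
    rw [Finset.mem_range] at hm
    rw [show f * (Polynomial.C ((-1 : MvPolynomial (Fin k) ℤ) ^ m * hsymm k m)
        * Polynomial.X ^ (d - 1 - m))
      = Polynomial.C ((-1 : MvPolynomial (Fin k) ℤ) ^ m * hsymm k m) * f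
        * Polynomial.X ^ (d - 1 - m) by ring,
      Polynomial.coeff_mul_X_pow', Polynomial.coeff_C_mul, fc]
    by_cases hc1 : d - 1 - m ≤ n
    · rw [if_pos hc1]
      by_cases hc2 : n - (d - 1 - m) ≤ k
      · rw [if_pos hc2, if_pos (by omega), show k - (n - (d - 1 - m)) = d + k - 1 - n - m by omega]
      · rw [if_neg hc2, if_neg (by omega), mul_zero]
    · rw [if_neg hc1]
      by_cases hc3 : m ≤ d + k - 1 - n
      · rw [if_pos hc3, esymm_gt k _ (by omega), mul_zero]
      · rw [if_neg hc3]
  -- the remainder has degree < k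
  have hdegR : (Polynomial.X ^ (d + k - 1) - f * Q).degree < (k : WithBot ℕ) := by
    rw [Polynomial.degree_lt_iff_coeff_zero]
    intro n hn
    have hn' : k ≤ n := by exact_mod_cast hn
    rw [Polynomial.coeff_sub]
    by_cases hbig : d + k - 1 < n
    · rcases Nat.eq_zero_or_pos d with hd | hd
      · rw [Polynomial.coeff_X_pow, if_neg (by omega)]
        subst hd
        simp [hQ]
      rw [Polynomial.coeff_X_pow, if_neg (by omega),
        Polynomial.coeff_eq_zero_of_natDegree_lt, sub_zero]
      have hQdeg : Q.natDegree ≤ d - 1 := by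
        apply Polynomial.natDegree_sum_le_of_forall_le
        intro m hm
        apply (Polynomial.natDegree_mul_le).trans
        rw [Polynomial.natDegree_C, Polynomial.natDegree_X_pow, zero_add]
        omega
      have := Polynomial.natDegree_mul_le (p := f) (q := Q)
      omega
    · rw [key n (by omega) (by omega), Polynomial.coeff_X_pow]
      by_cases ht0 : d + k - 1 - n = 0
      · have hd1 : 1 ≤ d := by omega
        rw [if_pos (by omega)]
        rw [Finset.sum_eq_single_of_mem 0 (by rw [Finset.mem_range]; omega)
          (fun m hm hm0 => by rw [if_neg (by omega)]), if_pos (by omega)]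
        simp [ht0, hsymm_zero']
      · rw [if_neg (by omega)]
        have hsub : ∑ m ∈ range d, (if m ≤ d + k - 1 - n then
            ((-1 : MvPolynomial (Fin k) ℤ) ^ m * hsymm k m)
              * esymm (Fin k) ℤ (d + k - 1 - n - m) else 0)
            = ∑ m ∈ range (d + k - 1 - n + 1),
              ((-1 : MvPolynomial (Fin k) ℤ) ^ m * hsymm k m)
                * esymm (Fin k) ℤ (d + k - 1 - n - m) := by
          rw [← Finset.sum_subset (s₁ := range (d + k - 1 - n + 1))
            (by intro x hx; rw [Finset.mem_range] at *; omega)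
            (fun x hx hnx => by rw [Finset.mem_range] at *; rw [if_neg (by omega)])]
          apply Finset.sum_congr rfl
          intro m hm
          rw [Finset.mem_range] at hm
          rw [if_pos (by omega)]
        rw [hsub, conv' k _ (by omega), sub_zero]
  -- identify the remainder
  have hmodeq : (Polynomial.X ^ (d + k - 1)) %ₘ f = Polynomial.X ^ (d + k - 1) - f * Q := by
    conv_lhs => rw [show (Polynomial.X ^ (d + k - 1) : Polynomial (MvPolynomial (Fin k) ℤ))
      = (Polynomial.X ^ (d + k - 1) - f * Q) + Q * f by ring]
    rw [Polynomial.add_modByMonic, Polynomial.mul_self_modByMonic hmonic, add_zero,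
      (Polynomial.modByMonic_eq_self_iff hmonic).mpr (by rw [hdegfd]; exact hdegR)]
  -- conclude
  rw [hmodeq, Polynomial.coeff_sub, key (k - 1) le_rfl (by omega), Polynomial.coeff_X_pow,
    show d + k - 1 - (k - 1) = d by omega]
  by_cases hd0 : d = 0
  · subst hd0
    simp [hsymm_zero']
  · rw [if_neg (by omega), Finset.sum_congr rfl
      (fun m hm => if_pos (by rw [Finset.mem_range] at hm; omega))]
    have hsplit := Finset.sum_range_succ
      (fun m => ((-1 : MvPolynomial (Fin k) ℤ) ^ m * hsymm k m) * esymm (Fin k) ℤ (d - m)) d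
    rw [conv' k d (by omega)] at hsplit
    have : ∑ m ∈ range d, ((-1 : MvPolynomial (Fin k) ℤ) ^ m * hsymm k m)
        * esymm (Fin k) ℤ (d - m)
        = -(((-1 : MvPolynomial (Fin k) ℤ) ^ d * hsymm k d) * esymm (Fin k) ℤ (d - d)) := by
      linear_combination -hsplit
    rw [this, Nat.sub_self, MvPolynomial.esymm_zero]
    ring
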